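/- Let X be the formal power series in ℤ⟦t⟧ whose coefficient of tⁿ is the sum of area(w) over all Dyck paths w of length n. Then t² − (4t² − 1)(2t² − 1)·X + t²·(4t² − 1)²·X² = 0 in ℤ⟦t⟧. -/

import Mathlib

open Finset

/-- Height after `i` steps of the walk `s`, starting at height `a`. -/
def height {n : ℕ} (a : ℤ) (s : Fin n → ℤ) (i : ℕ) : ℤ :=
  a + ∑ j ∈ Finset.univ.filter (fun j : Fin n => (j : ℕ) < i), s j

/-- The area under a path: the sum of its intermediate heights h_1 + ⋯ + h_{n−1}. -/
def area {n : ℕ} (s : Fin n → ℤ) : ℤ :=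
  ∑ i ∈ Finset.Ico 1 n, height 0 s i

open scoped Classical in
/-- Dyck paths of length `n`. -/
noncomputable def dyckPaths (n : ℕ) : Finset (Fin n → ℤ) :=
  (Fintype.piFinset fun _ => ({1, -1} : Finset ℤ)).filter
    (fun s => (∀ i ∈ Finset.Icc 1 n, 0 ≤ height 0 s i) ∧ height 0 s n = 0)

/-- The generating function whose coefficient of tⁿ is the sum of the areas of
all Dyck paths of length n. -/
noncomputable def A : PowerSeries ℤ :=
  PowerSeries.mk fun n => ∑ w ∈ dyckPaths n, area w

lemma height_zero {n : ℕ} (a : ℤ) (s : Fin n → ℤ) : height a s 0 = a := by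
  simp [height]

lemma height_succ {n : ℕ} (a : ℤ) (s : Fin n → ℤ) (i : ℕ) (h : i < n) :
    height a s (i + 1) = height a s i + s ⟨i, h⟩ := by
  unfold height
  have : Finset.univ.filter (fun j : Fin n => (j : ℕ) < i + 1)
      = insert (⟨i, h⟩ : Fin n) (Finset.univ.filter (fun j : Fin n => (j : ℕ) < i)) := by
    ext j; simp [Fin.ext_iff]; omega
  rw [this, Finset.sum_insert (by simp)]
  ring

lemma mem_dyckPaths {n : ℕ} {s : Fin n → ℤ} :
    s ∈ dyckPaths n ↔ (∀ j, s j = 1 ∨ s j = -1)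
      ∧ (∀ i, 1 ≤ i → i ≤ n → 0 ≤ height 0 s i) ∧ height 0 s n = 0 := by
  classical
  simp only [dyckPaths, Finset.mem_filter, Fintype.mem_piFinset, Finset.mem_insert,
    Finset.mem_singleton, Finset.mem_Icc]
  constructor
  · rintro ⟨h1, h2, h3⟩
    exact ⟨fun j => by simpa using h1 j, fun i hi hi' => h2 i ⟨hi, hi'⟩, h3⟩
  · rintro ⟨h1, h2, h3⟩
    exact ⟨fun j => by simpa using h1 j, fun i hi => h2 i hi.1 hi.2, h3⟩

lemma dyck_zero : dyckPaths 0 = {(fun j => 1 : Fin 0 → ℤ)} := by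
  ext s
  simp only [mem_dyckPaths, Finset.mem_singleton]
  constructor
  · intro _; funext j; exact absurd j.2 (by omega)
  · intro h; subst h
    refine ⟨fun j => Or.inl rfl, fun i hi hi' => by omega, height_zero 0 _⟩

lemma dyck_one : dyckPaths 1 = ∅ := by
  ext s
  simp only [mem_dyckPaths, Finset.notMem_empty, iff_false]
  rintro ⟨h1, h2, h3⟩
  have := height_succ 0 s 0 (by omega)
  rw [height_zero] at this
  rcases h1 ⟨0, by omega⟩ with h | h <;> rw [h] at this <;> norm_num [h3] at this

def glue {k l : ℕ} (u : Fin k → ℤ) (v : Fin l → ℤ) (i : Fin (k + l + 2)) : ℤ :=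
  if h0 : (i : ℕ) = 0 then 1
  else if hk : (i : ℕ) ≤ k then u ⟨(i : ℕ) - 1, by omega⟩
  else if hk1 : (i : ℕ) = k + 1 then -1
  else v ⟨(i : ℕ) - (k + 2), by have := i.2; omega⟩

lemma glue_low {k l : ℕ} (u : Fin k → ℤ) (v : Fin l → ℤ) (j : ℕ) (hj : j < k) :
    glue u v ⟨j + 1, by omega⟩ = u ⟨j, hj⟩ := by
  unfold glue
  rw [dif_neg (by simp), dif_pos (by simpa using hj)]
  congr 1

lemma glue_high {k l : ℕ} (u : Fin k → ℤ) (v : Fin l → ℤ) (j : ℕ) (hj : j < l) :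
    glue u v ⟨k + 2 + j, by omega⟩ = v ⟨j, hj⟩ := by
  unfold glue
  rw [dif_neg (by first | omega | (simp; omega) | simp), dif_neg (by first | omega | (simp; omega) | simp), dif_neg (by first | omega | (simp; omega) | simp)]
  congr 1
  simp [Fin.ext_iff]

lemma glue_zero {k l : ℕ} (u : Fin k → ℤ) (v : Fin l → ℤ) :
    glue u v ⟨0, by omega⟩ = 1 := by
  unfold glue; rw [dif_pos rfl]

lemma glue_mid {k l : ℕ} (u : Fin k → ℤ) (v : Fin l → ℤ) :
    glue u v ⟨k + 1, by omega⟩ = -1 := by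
  unfold glue
  rw [dif_neg (by simp), dif_neg (by simp), dif_pos rfl]

lemma height_glue_low {k l : ℕ} (u : Fin k → ℤ) (v : Fin l → ℤ) :
    ∀ i, 1 ≤ i → i ≤ k + 1 → height 0 (glue u v) i = 1 + height 0 u (i - 1) := by
  intro i
  induction i with
  | zero => omega
  | succ i ih =>
    intro _ hik
    rcases Nat.eq_zero_or_pos i with h0 | hpos
    · subst h0
      rw [height_succ 0 (glue u v) 0 (by omega)]
      rw [height_zero, height_zero]
      have := glue_zero u v
      rw [this]; ring
    · have hik' : i ≤ k + 1 := by omega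
      have hi1 : i - 1 < k := by omega
      rw [height_succ 0 (glue u v) i (by omega), ih hpos (by omega)]
      have : (⟨i, by omega⟩ : Fin (k+l+2)) = ⟨(i-1) + 1, by omega⟩ := by
        simp [Fin.ext_iff]; omega
      rw [this, glue_low u v (i-1) hi1]
      rw [show i + 1 - 1 = (i - 1) + 1 by omega, height_succ 0 u (i-1) hi1]
      ring


lemma height_glue_mid {k l : ℕ} (u : Fin k → ℤ) (v : Fin l → ℤ) :
    height 0 (glue u v) (k + 2) = height 0 u k := by
  rw [show k + 2 = (k+1) + 1 by ring, height_succ 0 (glue u v) (k+1) (by omega)]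
  rw [height_glue_low u v (k+1) (by omega) le_rfl, glue_mid]
  simp

lemma height_glue_high {k l : ℕ} (u : Fin k → ℤ) (v : Fin l → ℤ)
    (hu : height 0 u k = 0) :
    ∀ j, j ≤ l → height 0 (glue u v) (k + 2 + j) = height 0 v j := by
  intro j
  induction j with
  | zero =>
    intro _
    show height 0 (glue u v) (k + 2) = height 0 v 0
    rw [height_glue_mid u v, hu, height_zero]
  | succ j ih =>
    intro hj
    rw [show k + 2 + (j+1) = (k+2+j) + 1 by ring,
      height_succ 0 (glue u v) (k+2+j) (by omega), ih (by omega),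
      glue_high u v j (by omega), height_succ 0 v j (by omega)]

lemma glue_mem {k l : ℕ} {u : Fin k → ℤ} {v : Fin l → ℤ}
    (hu : u ∈ dyckPaths k) (hv : v ∈ dyckPaths l) :
    glue u v ∈ dyckPaths (k + l + 2) := by
  rw [mem_dyckPaths] at hu hv ⊢
  obtain ⟨hu1, hu2, hu3⟩ := hu
  obtain ⟨hv1, hv2, hv3⟩ := hv
  refine ⟨?_, ?_, ?_⟩
  · intro j
    unfold glue
    split
    · exact Or.inl rfl
    · split
      · exact hu1 _
      · split
        · exact Or.inr rfl
        · exact hv1 _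
  · intro i hi1 hin
    rcases le_or_gt i (k+1) with h | h
    · rw [height_glue_low u v i hi1 h]
      rcases Nat.eq_zero_or_pos (i-1) with h0 | hp
      · rw [h0, height_zero]; omega
      · have := hu2 (i-1) hp (by omega)
        omega
    · have hcast := congrArg (height 0 (glue u v)) (show i = k + 2 + (i - (k+2)) by omega)
      rw [hcast, height_glue_high u v hu3 (i - (k+2)) (by omega)]
      rcases Nat.eq_zero_or_pos (i - (k+2)) with h0 | hp
      · rw [h0, height_zero]
      · exact hv2 _ hp (by omega)
  · have hcast := congrArg (height 0 (glue u v)) (show k + l + 2 = k + 2 + l by omega)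
    rw [hcast, height_glue_high u v hu3 l le_rfl, hv3]


lemma area_glue {k l : ℕ} {u : Fin k → ℤ} {v : Fin l → ℤ}
    (hu3 : height 0 u k = 0) :
    area (glue u v) = (k + 1 : ℤ) + area u + area v := by
  have harea : area (glue u v) = ∑ i ∈ Finset.Ico 1 (k+l+2), height 0 (glue u v) i := rfl
  rw [harea,
    ← Finset.sum_Ico_consecutive (fun i => height 0 (glue u v) i)
    (by omega : 1 ≤ k+2) (by omega : k+2 ≤ k+l+2)]
  have h1 : ∑ i ∈ Finset.Ico 1 (k+2), height 0 (glue u v) i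
      = (k+1 : ℤ) + ∑ i ∈ Finset.Ico 1 (k+2), height 0 u (i-1) := by
    have e1 : ∑ i ∈ Finset.Ico 1 (k+2), height 0 (glue u v) i
        = ∑ i ∈ Finset.Ico 1 (k+2), (1 + height 0 u (i-1)) :=
      Finset.sum_congr rfl (fun i hi => by
        rw [Finset.mem_Ico] at hi
        exact height_glue_low u v i hi.1 (by omega))
    rw [e1, Finset.sum_add_distrib]
    simp [Nat.card_Ico]
  have h2 : ∑ i ∈ Finset.Ico 1 (k+2), height 0 u (i-1)
      = ∑ i ∈ Finset.Ico 0 (k+1), height 0 u i := by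
    apply Finset.sum_nbij' (fun i => i - 1) (fun i => i + 1) <;>
      intros <;> simp_all [Finset.mem_Ico] <;> omega
  have h3 : ∑ i ∈ Finset.Ico 0 (k+1), height 0 u i = area u := by
    rw [Finset.sum_eq_sum_Ico_succ_bot (by omega), height_zero]
    rcases Nat.eq_zero_or_pos k with h0 | hp
    · subst h0; simp [area]
    · rw [Finset.sum_Ico_succ_top (by omega : 1 ≤ k), hu3]
      simp [area]
  have h4 : ∑ i ∈ Finset.Ico (k+2) (k+l+2), height 0 (glue u v) i = area v := by
    rw [Finset.sum_Ico_eq_sum_range]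
    have e2 : k + l + 2 - (k + 2) = l := by omega
    rw [e2]
    have e3 : ∀ j ∈ Finset.range l, height 0 (glue u v) (k + 2 + j) = height 0 v j := by
      intro j hj
      rw [Finset.mem_range] at hj
      exact height_glue_high u v hu3 j (by omega)
    rw [Finset.sum_congr rfl e3]
    rcases Nat.eq_zero_or_pos l with h0 | hp
    · subst h0; simp [area]
    · rw [← Nat.Ico_zero_eq_range, Finset.sum_eq_sum_Ico_succ_bot (by omega), height_zero]
      simp [area]
  rw [h1, h2, h3, h4]

noncomputable def frd {n : ℕ} (w : Fin n → ℤ) : ℕ :=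
  sInf {i | 0 < i ∧ height 0 w i = 0}

lemma frd_spec {n : ℕ} {w : Fin n → ℤ} (hn : 0 < n) (hw : w ∈ dyckPaths n) :
    0 < frd w ∧ frd w ≤ n ∧ height 0 w (frd w) = 0
      ∧ ∀ i, 0 < i → i < frd w → height 0 w i ≠ 0 := by
  rw [mem_dyckPaths] at hw
  have hmem : n ∈ {i | 0 < i ∧ height 0 w i = 0} := ⟨hn, hw.2.2⟩
  have hspec := Nat.sInf_mem (Set.nonempty_of_mem hmem)
  refine ⟨hspec.1, Nat.sInf_le hmem, hspec.2, fun i hi0 hilt h0 => ?_⟩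
  exact Nat.notMem_of_lt_sInf hilt ⟨hi0, h0⟩

lemma w0_one {n : ℕ} {w : Fin n → ℤ} (hn : 0 < n) (hw : w ∈ dyckPaths n) :
    w ⟨0, hn⟩ = 1 := by
  rw [mem_dyckPaths] at hw
  have h1 : height 0 w 1 = w ⟨0, hn⟩ := by
    rw [show (1:ℕ) = 0 + 1 from rfl, height_succ 0 w 0 hn, height_zero]
    ring
  have h2 := hw.2.1 1 le_rfl hn
  rcases hw.1 ⟨0, hn⟩ with h | h
  · exact h
  · exfalso; rw [h1, h] at h2; omega

lemma frd_two_le {n : ℕ} {w : Fin n → ℤ} (hn : 2 ≤ n) (hw : w ∈ dyckPaths n) :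
    2 ≤ frd w := by
  obtain ⟨h1, h2, h3, h4⟩ := frd_spec (by omega) hw
  by_contra h
  have hf1 : frd w = 1 := by omega
  rw [hf1] at h3
  rw [show (1:ℕ) = 0 + 1 from rfl, height_succ 0 w 0 (by omega), height_zero,
    w0_one (by omega) hw] at h3
  omega

def splitL {k l : ℕ} (w : Fin (k + l + 2) → ℤ) : Fin k → ℤ :=
  fun j => w ⟨(j : ℕ) + 1, by have := j.2; omega⟩

def splitR {k l : ℕ} (w : Fin (k + l + 2) → ℤ) : Fin l → ℤ :=
  fun j => w ⟨k + 2 + (j : ℕ), by have := j.2; omega⟩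

lemma height_splitL {k l : ℕ} (w : Fin (k + l + 2) → ℤ) :
    ∀ i, i ≤ k → height 0 (splitL (k := k) (l := l) w) i = height (- w ⟨0, by omega⟩) w (i + 1) := by
  intro i
  induction i with
  | zero =>
    intro _
    rw [height_zero, show (0:ℕ)+1 = 0+1 from rfl, height_succ _ w 0 (by omega), height_zero]
    ring
  | succ i ih =>
    intro hi
    rw [height_succ 0 _ i (by omega), ih (by omega),
      show i + 1 + 1 = (i+1) + 1 from rfl, height_succ _ w (i+1) (by omega)]
    rfl

lemma height_splitR {k l : ℕ} (w : Fin (k + l + 2) → ℤ) :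
    ∀ j, j ≤ l → height 0 (splitR (k := k) (l := l) w) j
      = height (- height 0 w (k+2)) w (k + 2 + j) := by
  intro j
  induction j with
  | zero =>
    intro _
    show height 0 (splitR w) 0 = height (- height 0 w (k+2)) w (k+2)
    rw [height_zero]
    unfold height
    ring
  | succ j ih =>
    intro hj
    rw [height_succ 0 _ j (by omega), ih (by omega),
      show k + 2 + (j + 1) = (k+2+j) + 1 from rfl, height_succ _ w (k+2+j) (by omega)]
    rfl

lemma height_shift {n : ℕ} (a : ℤ) (w : Fin n → ℤ) (i : ℕ) :
    height a w i = a + height 0 w i := by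
  unfold height; ring

section Split

variable {k l : ℕ} {w : Fin (k + l + 2) → ℤ}
  (hw : w ∈ dyckPaths (k + l + 2)) (hfrd : frd w = k + 2)

include hw hfrd

lemma height_pos_before : ∀ i, 1 ≤ i → i ≤ k + 1 → 1 ≤ height 0 w i := by
  intro i hi1 hi2
  obtain ⟨_, _, _, hmin⟩ := frd_spec (by omega) hw
  have h1 := (mem_dyckPaths.mp hw).2.1 i hi1 (by omega)
  have h2 := hmin i (by omega) (by omega)
  omega

lemma w_zero_one : w ⟨0, by omega⟩ = 1 := w0_one (by omega) hw

lemma height_k1 : height 0 w (k + 1) = 1 := by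
  have h2 : height 0 w (k+2) = 0 := by
    have := frd_spec (n := k+l+2) (by omega) hw
    rw [hfrd] at this
    exact this.2.2.1
  have h3 : height 0 w (k+2) = height 0 w (k+1) + w ⟨k+1, by omega⟩ :=
    height_succ 0 w (k+1) (by omega)
  have h4 := height_pos_before hw hfrd (k+1) (by omega) (by omega)
  rcases (mem_dyckPaths.mp hw).1 ⟨k+1, by omega⟩ with h | h <;> rw [h] at h3 <;> omega

lemma w_mid_neg : w ⟨k + 1, by omega⟩ = -1 := by
  have h2 : height 0 w (k+2) = 0 := by
    have := frd_spec (n := k+l+2) (by omega) hw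
    rw [hfrd] at this
    exact this.2.2.1
  have h3 : height 0 w (k+2) = height 0 w (k+1) + w ⟨k+1, by omega⟩ :=
    height_succ 0 w (k+1) (by omega)
  have h4 := height_k1 hw hfrd
  omega

lemma splitL_mem : splitL (k := k) (l := l) w ∈ dyckPaths k := by
  have hw' := mem_dyckPaths.mp hw
  rw [mem_dyckPaths]
  refine ⟨fun j => hw'.1 _, ?_, ?_⟩
  · intro i hi1 hik
    rw [height_splitL w i (by omega), w_zero_one hw hfrd, height_shift]
    have := height_pos_before hw hfrd (i+1) (by omega) (by omega)
    omega
  · rw [height_splitL w k le_rfl, w_zero_one hw hfrd, height_shift,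
      height_k1 hw hfrd]
    ring

lemma splitR_mem : splitR (k := k) (l := l) w ∈ dyckPaths l := by
  have hw' := mem_dyckPaths.mp hw
  have h2 : height 0 w (k+2) = 0 := by
    have := frd_spec (n := k+l+2) (by omega) hw
    rw [hfrd] at this
    exact this.2.2.1
  rw [mem_dyckPaths]
  refine ⟨fun j => hw'.1 _, ?_, ?_⟩
  · intro j hj1 hjl
    rw [height_splitR w j (by omega), h2, height_shift]
    have := hw'.2.1 (k+2+j) (by omega) (by omega)
    omega
  · rw [height_splitR w l le_rfl, h2, height_shift]
    have hcast := congrArg (height 0 w) (show k + 2 + l = k + l + 2 by omega)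
    rw [hcast, hw'.2.2]
    ring

lemma glue_split : glue (splitL (k := k) (l := l) w) (splitR (k := k) (l := l) w) = w := by
  funext i
  have hi := i.2
  rcases Nat.eq_zero_or_pos (i : ℕ) with h0 | hp
  · have : i = ⟨0, by omega⟩ := by simp [Fin.ext_iff, h0]
    rw [this]
    rw [show (⟨0, by omega⟩ : Fin (k+l+2)) = ⟨0, by omega⟩ from rfl]
    rw [glue_zero, w_zero_one hw hfrd]
  · rcases le_or_gt (i : ℕ) k with hik | hik
    · have : i = ⟨((i : ℕ) - 1) + 1, by omega⟩ := by simp [Fin.ext_iff]; omega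
      rw [this, glue_low _ _ _ (by omega : (i:ℕ) - 1 < k)]
      rfl
    · rcases Nat.eq_or_lt_of_le (show k + 1 ≤ (i : ℕ) by omega) with hik1 | hik1
      · have : i = ⟨k + 1, by omega⟩ := by simp [Fin.ext_iff]; omega
        rw [this, glue_mid, w_mid_neg hw hfrd]
      · have : i = ⟨k + 2 + ((i : ℕ) - (k+2)), by omega⟩ := by simp [Fin.ext_iff]; omega
        rw [this, glue_high _ _ _ (by omega : (i:ℕ) - (k+2) < l)]
        rfl

end Split

lemma splitL_glue {k l : ℕ} (u : Fin k → ℤ) (v : Fin l → ℤ) :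
    splitL (k := k) (l := l) (glue u v) = u := by
  funext j
  have := glue_low u v (j : ℕ) j.2
  unfold splitL
  rw [this]

lemma splitR_glue {k l : ℕ} (u : Fin k → ℤ) (v : Fin l → ℤ) :
    splitR (k := k) (l := l) (glue u v) = v := by
  funext j
  have := glue_high u v (j : ℕ) j.2
  unfold splitR
  rw [this]

lemma frd_glue {k l : ℕ} {u : Fin k → ℤ} {v : Fin l → ℤ}
    (hu : u ∈ dyckPaths k) (hv : v ∈ dyckPaths l) :
    frd (glue u v) = k + 2 := by
  have hu' := mem_dyckPaths.mp hu
  have hmem : k + 2 ∈ {i | 0 < i ∧ height 0 (glue u v) i = 0} := by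
    refine ⟨by omega, ?_⟩
    rw [height_glue_mid, hu'.2.2]
  have hmin : ∀ i ∈ {i | 0 < i ∧ height 0 (glue u v) i = 0}, k + 2 ≤ i := by
    rintro i ⟨hi0, hi⟩
    by_contra h
    rw [height_glue_low u v i hi0 (by omega)] at hi
    rcases Nat.eq_zero_or_pos (i - 1) with h0 | hp
    · rw [h0, height_zero] at hi; omega
    · have := hu'.2.1 (i-1) hp (by omega)
      omega
  have h1 := Nat.sInf_mem (Set.nonempty_of_mem hmem)
  have h2 := Nat.sInf_le hmem
  have h3 := hmin _ h1
  unfold frd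
  omega

lemma fiber_sum {k l : ℕ} (F : (Fin (k + l + 2) → ℤ) → ℤ) :
    ∑ w ∈ (dyckPaths (k+l+2)).filter (fun w => frd w = k + 2), F w
      = ∑ u ∈ dyckPaths k, ∑ v ∈ dyckPaths l, F (glue u v) := by
  classical
  rw [← Finset.sum_product']
  apply Finset.sum_nbij' (fun w => (splitL w, splitR w)) (fun p => glue p.1 p.2)
  · intro w hw
    rw [Finset.mem_filter] at hw
    rw [Finset.mem_product]
    exact ⟨splitL_mem hw.1 hw.2, splitR_mem hw.1 hw.2⟩
  · intro p hp
    rw [Finset.mem_product] at hp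
    rw [Finset.mem_filter]
    exact ⟨glue_mem hp.1 hp.2, frd_glue hp.1 hp.2⟩
  · intro w hw
    rw [Finset.mem_filter] at hw
    exact glue_split hw.1 hw.2
  · intro p hp
    rw [Finset.mem_product] at hp
    simp [splitL_glue, splitR_glue]
  · intro w hw
    rw [Finset.mem_filter] at hw
    rw [glue_split hw.1 hw.2]

lemma sum_dyck_decomp (m : ℕ) (F : ∀ {n : ℕ}, (Fin n → ℤ) → ℤ) :
    ∑ w ∈ dyckPaths (m + 2), F w
      = ∑ p ∈ Finset.HasAntidiagonal.antidiagonal m, ∑ u ∈ dyckPaths p.1, ∑ v ∈ dyckPaths p.2,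
          F (glue u v) := by
  classical
  rw [← Finset.sum_fiberwise_of_maps_to
    (g := fun w => ((frd w - 2, m - (frd w - 2)) : ℕ × ℕ)) (t := Finset.HasAntidiagonal.antidiagonal m)
    (fun w hw => by
      obtain ⟨h1, h2, _, _⟩ := frd_spec (n := m+2) (by omega) hw
      have := frd_two_le (by omega) hw
      simp only [Finset.HasAntidiagonal.mem_antidiagonal]
      omega)]
  apply Finset.sum_congr rfl
  rintro ⟨a, b⟩ hp
  rw [Finset.HasAntidiagonal.mem_antidiagonal] at hp
  simp only at hp ⊢
  subst hp
  have hset : (dyckPaths (a + b + 2)).filter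
        (fun w => (frd w - 2, a + b - (frd w - 2)) = (a, b))
      = (dyckPaths (a + b + 2)).filter (fun w => frd w = a + 2) := by
    apply Finset.filter_congr
    intro w hw
    obtain ⟨h1, h2, _, _⟩ := frd_spec (n := a+b+2) (by omega) hw
    have := frd_two_le (by omega) hw
    simp only [Prod.mk.injEq, eq_iff_iff]
    constructor
    · rintro ⟨ha, hb⟩; omega
    · intro h; constructor <;> omega
  rw [hset, fiber_sum]


noncomputable def Cps : PowerSeries ℤ :=
  PowerSeries.mk fun n => ((dyckPaths n).card : ℤ)

noncomputable def Dps : PowerSeries ℤ :=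
  PowerSeries.mk fun n => ((dyckPaths n).card : ℤ) * ((n : ℤ) + 1)

lemma rec1 (m : ℕ) : ((dyckPaths (m+2)).card : ℤ)
    = ∑ p ∈ Finset.HasAntidiagonal.antidiagonal m, ((dyckPaths p.1).card : ℤ) * ((dyckPaths p.2).card : ℤ) := by
  have h := sum_dyck_decomp m (fun {n} _ => (1 : ℤ))
  simp only [Finset.sum_const, nsmul_eq_mul, mul_one] at h
  rw [h]

lemma rec2 (m : ℕ) : (∑ w ∈ dyckPaths (m+2), area w)
    = ∑ p ∈ Finset.HasAntidiagonal.antidiagonal m,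
        (((dyckPaths p.1).card : ℤ) * ((p.1 : ℤ) + 1) * ((dyckPaths p.2).card : ℤ)
          + (∑ w ∈ dyckPaths p.1, area w) * ((dyckPaths p.2).card : ℤ)
          + ((dyckPaths p.1).card : ℤ) * (∑ w ∈ dyckPaths p.2, area w)) := by
  have h := sum_dyck_decomp m (fun {n} w => area w)
  rw [h]
  apply Finset.sum_congr rfl
  rintro ⟨k, l⟩ hp
  simp only
  have e1 : ∀ u ∈ dyckPaths k, ∀ v ∈ dyckPaths l,
      area (glue u v) = ((k : ℤ) + 1) + area u + area v := by
    intro u hu v _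
    exact area_glue (mem_dyckPaths.mp hu).2.2
  calc ∑ u ∈ dyckPaths k, ∑ v ∈ dyckPaths l, area (glue u v)
      = ∑ u ∈ dyckPaths k, ∑ v ∈ dyckPaths l, (((k : ℤ) + 1) + area u + area v) :=
        Finset.sum_congr rfl fun u hu => Finset.sum_congr rfl fun v hv => e1 u hu v hv
    _ = _ := by
        simp only [Finset.sum_add_distrib, Finset.sum_const, nsmul_eq_mul, ← Finset.mul_sum]
        ring

lemma A_coeff_zero : (∑ w ∈ dyckPaths 0, area w) = 0 := by
  rw [dyck_zero]
  simp [area]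

lemma hC : Cps = 1 + PowerSeries.X ^ 2 * Cps ^ 2 := by
  ext n
  rw [map_add, PowerSeries.coeff_one]
  match n with
  | 0 =>
    rw [show (PowerSeries.X : PowerSeries ℤ)^2 * Cps^2 = PowerSeries.X * (PowerSeries.X * Cps^2) by ring,
      PowerSeries.coeff_zero_X_mul]
    simp [Cps, dyck_zero]
  | 1 =>
    rw [show (PowerSeries.X : PowerSeries ℤ)^2 * Cps^2 = PowerSeries.X * (PowerSeries.X * Cps^2) by ring,
      PowerSeries.coeff_succ_X_mul, PowerSeries.coeff_zero_X_mul]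
    simp [Cps, dyck_one]
  | (m+2) =>
    rw [PowerSeries.coeff_X_pow_mul, sq, PowerSeries.coeff_mul]
    simp only [Cps, PowerSeries.coeff_mk]
    rw [if_neg (by omega)]
    rw [rec1 m]
    simp

lemma hA : A = PowerSeries.X ^ 2 * (Dps * Cps) + 2 * (PowerSeries.X ^ 2 * (A * Cps)) := by
  ext n
  rw [map_add]
  match n with
  | 0 =>
    rw [show (PowerSeries.X : PowerSeries ℤ)^2 * (Dps * Cps) = PowerSeries.X * (PowerSeries.X * (Dps * Cps)) by ring]
    rw [show 2 * ((PowerSeries.X : PowerSeries ℤ)^2 * (A * Cps)) = PowerSeries.X * (PowerSeries.X * (2 * (A * Cps))) by ring]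
    rw [PowerSeries.coeff_zero_X_mul, PowerSeries.coeff_zero_X_mul]
    simp [A, A_coeff_zero]
  | 1 =>
    rw [show (PowerSeries.X : PowerSeries ℤ)^2 * (Dps * Cps) = PowerSeries.X * (PowerSeries.X * (Dps * Cps)) by ring]
    rw [show 2 * ((PowerSeries.X : PowerSeries ℤ)^2 * (A * Cps)) = PowerSeries.X * (PowerSeries.X * (2 * (A * Cps))) by ring]
    rw [PowerSeries.coeff_succ_X_mul, PowerSeries.coeff_succ_X_mul,
      PowerSeries.coeff_zero_X_mul, PowerSeries.coeff_zero_X_mul]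
    simp [A, dyck_one]
  | (m+2) =>
    rw [show 2 * ((PowerSeries.X : PowerSeries ℤ)^2 * (A * Cps)) = PowerSeries.X^2 * (A * Cps + Cps * A) by ring]
    rw [PowerSeries.coeff_X_pow_mul, PowerSeries.coeff_X_pow_mul, map_add,
      PowerSeries.coeff_mul, PowerSeries.coeff_mul, PowerSeries.coeff_mul]
    simp only [A, Cps, Dps, PowerSeries.coeff_mk]
    rw [rec2 m, ← Finset.sum_add_distrib, ← Finset.sum_add_distrib]
    apply Finset.sum_congr rfl
    rintro ⟨k, l⟩ hp
    push_cast
    ring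

open PowerSeries in
lemma hD : Dps = Cps + PowerSeries.X * (d⁄dX ℤ Cps) := by
  have h1 : Dps = d⁄dX ℤ (PowerSeries.X * Cps) := by
    ext n
    rw [PowerSeries.coeff_derivative, PowerSeries.coeff_succ_X_mul]
    simp [Dps, Cps]
  rw [h1, Derivation.leibniz, PowerSeries.derivative_X]
  simp only [smul_eq_mul, mul_one, one_smul]
  ring

open PowerSeries in
lemma hC' : d⁄dX ℤ Cps = 2 * PowerSeries.X * Cps^2
    + 2 * PowerSeries.X^2 * (Cps * d⁄dX ℤ Cps) := by
  have h := congrArg (d⁄dX ℤ) hC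
  rw [map_add, Derivation.map_one_eq_zero, Derivation.leibniz] at h
  have hX2 : d⁄dX ℤ ((PowerSeries.X : PowerSeries ℤ)^2) = 2 * PowerSeries.X := by
    rw [sq, Derivation.leibniz, PowerSeries.derivative_X]
    simp only [smul_eq_mul, mul_one]
    ring
  have hC2 : d⁄dX ℤ (Cps^2) = 2 * Cps * d⁄dX ℤ Cps := by
    rw [sq, Derivation.leibniz]
    simp only [smul_eq_mul]
    ring
  rw [hX2, hC2, smul_eq_mul, smul_eq_mul] at h
  linear_combination h


/-- t² − (4t² − 1)(2t² − 1)·X + t²·(4t² − 1)²·X² = 0 for the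
generating function X of the sums of areas of Dyck paths. -/
theorem stmt18 :
    (PowerSeries.X : PowerSeries ℤ) ^ 2
      - (4 * (PowerSeries.X : PowerSeries ℤ) ^ 2 - 1) *
          (2 * (PowerSeries.X : PowerSeries ℤ) ^ 2 - 1) * A
      + (PowerSeries.X : PowerSeries ℤ) ^ 2 *
          (4 * (PowerSeries.X : PowerSeries ℤ) ^ 2 - 1) ^ 2 * A ^ 2 = 0 := by
  set X := (PowerSeries.X : PowerSeries ℤ)
  set C := Cps
  set Cp := PowerSeries.derivative ℤ Cps
  have h1 : C = 1 + X^2 * C^2 := hC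
  have h2 : A = X^2 * (Dps * C) + 2 * (X^2 * (A * C)) := hA
  have h3 : Dps = C + X * Cp := hD
  have h4 : Cp = 2 * X * C^2 + 2 * X^2 * (C * Cp) := hC'
  have h5 : A * (1 - 2*X^2*C) = X^2 * C * (C + X * Cp) := by
    linear_combination h2 + X^2*C*h3
  have h6 : A * (1 - 2*X^2*C)^2 = X^2 * C^2 := by
    linear_combination (1 - 2*X^2*C) * h5 + X^3*C*h4
  have h7 : A * (1 - 4*X^2) = C - 1 := by
    linear_combination h6 + (4*X^2*A - 1) * h1
  linear_combination (-1 : PowerSeries ℤ) * h1 + (X^2*C + X^2*((1 - 4*X^2)*A + 1) - 1) * h7
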